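/- For every t ≥ 0, with η = (t mod k)+1, the row-normalization step of the multi-set Sinkhorn algorithm satisfies D(Z, Γ⁽ᵗ⁾, η) − D(Z, Γ'⁽ᵗ⁾, η) = D_KL(π_{v_η} ‖ π_{v⁽ᵗ⁾_η}), where Z is any feasible matrix. -/
import Mathlib


open Finset

noncomputable section

/-- Row normalization step w.r.t. the η-th set of marginals. -/
def rowNorm {m n k : ℕ} (u : Fin k → Fin n → ℝ) (v : Fin k → Fin m → ℝ) (η : Fin k)
    (G : Matrix (Fin m) (Fin n) ℝ) : Matrix (Fin m) (Fin n) ℝ :=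
  fun i j => G i j * v η i / ∑ j', G i j' * u η j'

/-- Column normalization step w.r.t. the η-th set of marginals (columns with
`u η j = 0` are left untouched). -/
def colNorm {m n k : ℕ} (u : Fin k → Fin n → ℝ) (η : Fin k)
    (G : Matrix (Fin m) (Fin n) ℝ) : Matrix (Fin m) (Fin n) ℝ :=
  fun i j => if 0 < u η j then G i j * u η j / ∑ i', G i' j * u η j else G i j

/-- The marginal-set index η = (t mod k) + 1, as a 0-based index of `Fin k`. -/
def etaIdx (k : ℕ) (hk : 0 < k) (t : ℕ) : Fin k := ⟨t % k, Nat.mod_lt t hk⟩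

/-- The multi-set Sinkhorn iterates Γ⁽ᵗ⁾. -/
def Gamma {m n k : ℕ} (S : Matrix (Fin m) (Fin n) ℝ) (u : Fin k → Fin n → ℝ)
    (v : Fin k → Fin m → ℝ) (hk : 0 < k) : ℕ → Matrix (Fin m) (Fin n) ℝ
  | 0 => fun i j => S i j / ∑ i', S i' j
  | t + 1 => colNorm u (etaIdx k hk t) (rowNorm u v (etaIdx k hk t) (Gamma S u v hk t))

/-- The row-normalized multi-set Sinkhorn iterates Γ'⁽ᵗ⁾. -/
def Gamma' {m n k : ℕ} (S : Matrix (Fin m) (Fin n) ℝ) (u : Fin k → Fin n → ℝ)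
    (v : Fin k → Fin m → ℝ) (hk : 0 < k) (t : ℕ) : Matrix (Fin m) (Fin n) ℝ :=
  rowNorm u v (etaIdx k hk t) (Gamma S u v hk t)

/-- D(Z, Γ, η) = (1/h_η) Σ_{i,j} z_{i,j} u_{η,j} log(z_{i,j}/Γ_{i,j}); the convention
0·log 0 = 0 is automatic since `Real.log 0 = 0` in Mathlib. -/
def Ddiv {m n k : ℕ} (u : Fin k → Fin n → ℝ) (h : Fin k → ℝ)
    (Z G : Matrix (Fin m) (Fin n) ℝ) (η : Fin k) : ℝ :=
  (1 / h η) * ∑ i, ∑ j, Z i j * u η j * Real.log (Z i j / G i j)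

/-- A feasible matrix Z ∈ [0,1]^{m×n}: supported where S is, columns summing to 1, and
realizing all k sets of marginals. -/
def Feasible {m n k : ℕ} (S : Matrix (Fin m) (Fin n) ℝ) (u : Fin k → Fin n → ℝ)
    (v : Fin k → Fin m → ℝ) (Z : Matrix (Fin m) (Fin n) ℝ) : Prop :=
  (∀ i j, Z i j ∈ Set.Icc (0 : ℝ) 1) ∧ (∀ i j, S i j = 0 → Z i j = 0) ∧
    (∀ j, ∑ i, Z i j = 1) ∧ (∀ η i, ∑ j, Z i j * u η j = v η i)

/-- α = (smallest positive entry of S) / (largest entry of S). -/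
def alphaS {m n : ℕ} (S : Matrix (Fin m) (Fin n) ℝ) : ℝ :=
  sInf {x : ℝ | 0 < x ∧ ∃ i j, S i j = x} / sSup {x : ℝ | ∃ i j, S i j = x}

/-- Δ = the maximum number of positive entries in any column of S. -/
def DeltaS {m n : ℕ} (S : Matrix (Fin m) (Fin n) ℝ) : ℕ :=
  Finset.univ.sup fun j => Nat.card {i : Fin m // 0 < S i j}

/-- KL divergence between the target row marginals v_η and the row marginals achieved
by Γ⁽ᵗ⁾, where η = (t mod k) + 1. -/
def KLv {m n k : ℕ} (S : Matrix (Fin m) (Fin n) ℝ) (u : Fin k → Fin n → ℝ)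
    (v : Fin k → Fin m → ℝ) (h : Fin k → ℝ) (hk : 0 < k) (t : ℕ) : ℝ :=
  ∑ i, (v (etaIdx k hk t) i / h (etaIdx k hk t)) *
    Real.log (v (etaIdx k hk t) i / ∑ j, Gamma S u v hk t i j * u (etaIdx k hk t) j)

/-- KL divergence between the target column marginals u_η and the column marginals
achieved by Γ'⁽ᵗ⁾, where η = (t mod k) + 1; terms with `u η j = 0` vanish since
`Real.log 0 = 0`. -/
def KLu {m n k : ℕ} (S : Matrix (Fin m) (Fin n) ℝ) (u : Fin k → Fin n → ℝ)
    (v : Fin k → Fin m → ℝ) (h : Fin k → ℝ) (hk : 0 < k) (t : ℕ) : ℝ :=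
  ∑ j, (u (etaIdx k hk t) j / h (etaIdx k hk t)) *
    Real.log (u (etaIdx k hk t) j / ∑ i, Gamma' S u v hk t i j * u (etaIdx k hk t) j)

/-- Nonnegativity and positivity (on the support of S) of the Sinkhorn iterates. -/
lemma gamma_props {m n k : ℕ} (hk : 0 < k)
    (S : Matrix (Fin m) (Fin n) ℝ)
    (hS : ∀ i j, 0 ≤ S i j) (hScol : ∀ j, ∃ i, 0 < S i j)
    (u : Fin k → Fin n → ℝ) (v : Fin k → Fin m → ℝ)
    (hu : ∀ η j, 0 ≤ u η j) (hv : ∀ η i, 0 < v η i)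
    (Z : Matrix (Fin m) (Fin n) ℝ) (hZ : Feasible S u v Z)
    (t : ℕ) :
    (∀ i j, 0 ≤ Gamma S u v hk t i j) ∧
      (∀ i j, 0 < S i j → 0 < Gamma S u v hk t i j) := by
  obtain ⟨hZ01, hZsupp, hZcol, hZmarg⟩ := hZ
  induction t with
  | zero =>
    constructor
    · intro i j
      exact div_nonneg (hS i j) (Finset.sum_nonneg fun i' _ => hS i' j)
    · intro i j hij
      exact div_pos hij
        (Finset.sum_pos' (fun i' _ => hS i' j) ⟨i, Finset.mem_univ i, hij⟩)
  | succ s ih =>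
    obtain ⟨ihn, ihp⟩ := ih
    set ζ := etaIdx k hk s with hζ
    set A := Gamma S u v hk s with hA
    have rpos : ∀ i, 0 < ∑ j', A i j' * u ζ j' := by
      intro i
      have hvz : ∑ _j : Fin n, (0 : ℝ) < ∑ j, Z i j * u ζ j := by
        rw [hZmarg ζ i]; simpa using hv ζ i
      obtain ⟨j0, _, hj0⟩ := Finset.exists_lt_of_sum_lt hvz
      have hZpos : 0 < Z i j0 := by
        rcases lt_or_eq_of_le (hZ01 i j0).1 with hlt | heq
        · exact hlt
        · exfalso; rw [← heq] at hj0; simp at hj0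
      have hupos : 0 < u ζ j0 := by
        rcases lt_or_eq_of_le (hu ζ j0) with hlt | heq
        · exact hlt
        · exfalso; rw [← heq] at hj0; simp at hj0
      have hSpos : 0 < S i j0 := by
        rcases lt_or_eq_of_le (hS i j0) with hlt | heq
        · exact hlt
        · exact absurd (hZsupp i j0 heq.symm) (ne_of_gt hZpos)
      refine Finset.sum_pos' (fun j' _ => mul_nonneg (ihn i j') (hu ζ j')) ?_
      exact ⟨j0, Finset.mem_univ j0, mul_pos (ihp i j0 hSpos) hupos⟩
    have Bnn : ∀ i j, 0 ≤ rowNorm u v ζ A i j := fun i j =>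
      div_nonneg (mul_nonneg (ihn i j) (hv ζ i).le) (rpos i).le
    have Bpos : ∀ i j, 0 < S i j → 0 < rowNorm u v ζ A i j := fun i j hij =>
      div_pos (mul_pos (ihp i j hij) (hv ζ i)) (rpos i)
    have hG1 : Gamma S u v hk (s + 1) = colNorm u ζ (rowNorm u v ζ A) := rfl
    rw [hG1]
    constructor
    · intro i j
      unfold colNorm
      split
      · next hupos =>
        refine div_nonneg (mul_nonneg (Bnn i j) hupos.le) ?_
        exact Finset.sum_nonneg fun i' _ => mul_nonneg (Bnn i' j) hupos.le
      · exact Bnn i j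
    · intro i j hij
      unfold colNorm
      split
      · next hupos =>
        refine div_pos (mul_pos (Bpos i j hij) hupos) ?_
        obtain ⟨i0, hi0⟩ := hScol j
        refine Finset.sum_pos' (fun i' _ => mul_nonneg (Bnn i' j) hupos.le) ?_
        exact ⟨i0, Finset.mem_univ i0, mul_pos (Bpos i0 j hi0) hupos⟩
      · exact Bpos i j hij

/-- Lemma 3.4, first identity: D(Z, Γ⁽ᵗ⁾, η) − D(Z, Γ'⁽ᵗ⁾, η) = D_KL(π_{v_η} ‖ π_{v⁽ᵗ⁾_η}). -/
theorem stmt1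
    {m n k : ℕ} (hk : 0 < k)
    (S : Matrix (Fin m) (Fin n) ℝ)
    (hS : ∀ i j, 0 ≤ S i j) (hScol : ∀ j, ∃ i, 0 < S i j)
    (u : Fin k → Fin n → ℝ) (v : Fin k → Fin m → ℝ)
    (hu : ∀ η j, 0 ≤ u η j) (hv : ∀ η i, 0 < v η i)
    (h : Fin k → ℝ) (hh : ∀ η, 0 < h η)
    (hvh : ∀ η, ∑ i, v η i = h η) (huh : ∀ η, ∑ j, u η j = h η)
    (Z : Matrix (Fin m) (Fin n) ℝ) (hZ : Feasible S u v Z)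
    (t : ℕ) :
    Ddiv u h Z (Gamma S u v hk t) (etaIdx k hk t) -
        Ddiv u h Z (Gamma' S u v hk t) (etaIdx k hk t) =
      KLv S u v h hk t := by
  obtain ⟨hn, hp⟩ := gamma_props hk S hS hScol u v hu hv Z hZ t
  obtain ⟨hZ01, hZsupp, hZcol, hZmarg⟩ := hZ
  set η := etaIdx k hk t with hη
  set G := Gamma S u v hk t with hG
  have rpos : ∀ i, 0 < ∑ j', G i j' * u η j' := by
    intro i
    have hvz : ∑ _j : Fin n, (0 : ℝ) < ∑ j, Z i j * u η j := by
      rw [hZmarg η i]; simpa using hv η i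
    obtain ⟨j0, _, hj0⟩ := Finset.exists_lt_of_sum_lt hvz
    have hZpos : 0 < Z i j0 := by
      rcases lt_or_eq_of_le (hZ01 i j0).1 with hlt | heq
      · exact hlt
      · exfalso; rw [← heq] at hj0; simp at hj0
    have hupos : 0 < u η j0 := by
      rcases lt_or_eq_of_le (hu η j0) with hlt | heq
      · exact hlt
      · exfalso; rw [← heq] at hj0; simp at hj0
    have hSpos : 0 < S i j0 := by
      rcases lt_or_eq_of_le (hS i j0) with hlt | heq
      · exact hlt
      · exact absurd (hZsupp i j0 heq.symm) (ne_of_gt hZpos)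
    refine Finset.sum_pos' (fun j' _ => mul_nonneg (hn i j') (hu η j')) ?_
    exact ⟨j0, Finset.mem_univ j0, mul_pos (hp i j0 hSpos) hupos⟩
  have hG' : Gamma' S u v hk t = rowNorm u v η G := rfl
  have key : ∀ i j,
      Z i j * u η j *
          (Real.log (Z i j / G i j) - Real.log (Z i j / rowNorm u v η G i j)) =
        Z i j * u η j * Real.log (v η i / ∑ j', G i j' * u η j') := by
    intro i j
    by_cases hzu : Z i j * u η j = 0
    · rw [hzu]; ring
    · have hz : Z i j ≠ 0 := fun h0 => hzu (by rw [h0]; ring)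
      have hub : u η j ≠ 0 := fun h0 => hzu (by rw [h0]; ring)
      have hZpos : 0 < Z i j := lt_of_le_of_ne (hZ01 i j).1 (Ne.symm hz)
      have hSpos : 0 < S i j := by
        rcases lt_or_eq_of_le (hS i j) with hlt | heq
        · exact hlt
        · exact absurd (hZsupp i j heq.symm) hz
      have hGpos : 0 < G i j := hp i j hSpos
      have hGne : G i j ≠ 0 := ne_of_gt hGpos
      have hrne : (∑ j', G i j' * u η j') ≠ 0 := ne_of_gt (rpos i)
      have hvne : v η i ≠ 0 := ne_of_gt (hv η i)
      have hGeq : rowNorm u v η G i j =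
          G i j * (v η i / ∑ j', G i j' * u η j') := by
        unfold rowNorm; ring
      congr 1
      rw [hGeq, Real.log_div hz hGne,
        Real.log_div hz (mul_ne_zero hGne (div_ne_zero hvne hrne)),
        Real.log_mul hGne (div_ne_zero hvne hrne)]
      ring
  have lhs_eq : Ddiv u h Z G η - Ddiv u h Z (Gamma' S u v hk t) η =
      (1 / h η) * ∑ i, ∑ j, Z i j * u η j *
        (Real.log (Z i j / G i j) - Real.log (Z i j / rowNorm u v η G i j)) := by
    rw [hG']
    unfold Ddiv
    rw [← mul_sub, ← Finset.sum_sub_distrib]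
    congr 1
    refine Finset.sum_congr rfl fun i _ => ?_
    rw [← Finset.sum_sub_distrib]
    exact Finset.sum_congr rfl fun j _ => by ring
  rw [lhs_eq]
  have inner : ∀ i, ∑ j, Z i j * u η j *
      (Real.log (Z i j / G i j) - Real.log (Z i j / rowNorm u v η G i j)) =
      v η i * Real.log (v η i / ∑ j', G i j' * u η j') := by
    intro i
    rw [Finset.sum_congr rfl fun j _ => key i j, ← Finset.sum_mul, hZmarg η i]
  rw [Finset.sum_congr rfl fun i _ => inner i]
  unfold KLv
  rw [Finset.mul_sum]
  exact Finset.sum_congr rfl fun i _ => by rw [← hG, ← hη]; ring
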